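/- Let (Ω, P) be a probability space, n : ℕ, and S : Fin (n+1) → Ω → ℝ a family of measurable random variables that is exchangeable: for every permutation π of Fin (n+1), the pushforward law of the map ω ↦ (i ↦ S(π(i))(ω)) on the space Fin (n+1) → ℝ equals the pushforward law of ω ↦ (i ↦ S(i)(ω)). Assume the values are almost surely distinct: P( { ω | ∃ i ≠ j, S(i)(ω) = S(j)(ω) } ) = 0. Then for every natural number k with 1 ≤ k ≤ n+1: P( { ω | card { j : Fin (n+1) | S(j)(ω) ≤ S(Fin.last n)(ω) } ≤ k } ) = k/(n+1). -/

import Mathlib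

open MeasureTheory
open scoped Classical

namespace ConformalAux

variable {n : ℕ}

noncomputable def rk (x : Fin (n + 1) → ℝ) (i : Fin (n + 1)) : ℕ :=
  (Finset.univ.filter (fun j => x j ≤ x i)).card

lemma rk_pos (x : Fin (n + 1) → ℝ) (i : Fin (n + 1)) : 1 ≤ rk x i := by
  have : i ∈ Finset.univ.filter (fun j => x j ≤ x i) := by simp
  exact Finset.card_pos.2 ⟨i, this⟩

lemma rk_le (x : Fin (n + 1) → ℝ) (i : Fin (n + 1)) : rk x i ≤ n + 1 := by
  simpa [rk] using (Finset.card_filter_le Finset.univ (fun j => x j ≤ x i))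

lemma rk_comp (x : Fin (n + 1) → ℝ) (π : Equiv.Perm (Fin (n + 1))) (i : Fin (n + 1)) :
    rk (fun j => x (π j)) i = rk x (π i) := by
  unfold rk
  apply Finset.card_bij' (fun j _ => π j) (fun j _ => π.symm j) <;> simp

lemma rk_strictMono (x : Fin (n + 1) → ℝ) {i j : Fin (n + 1)} (h : x i < x j) :
    rk x i < rk x j := by
  unfold rk
  apply Finset.card_lt_card
  constructor
  · intro a ha
    simp only [Finset.mem_filter, Finset.mem_univ, true_and] at ha ⊢
    exact ha.trans h.le
  · intro hsub
    have := hsub (by simp : j ∈ Finset.univ.filter (fun a => x a ≤ x j))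
    simp only [Finset.mem_filter, Finset.mem_univ, true_and] at this
    exact absurd this (not_le.2 h)

lemma rk_inj {x : Fin (n + 1) → ℝ} (hx : Function.Injective x) :
    Function.Injective (rk x) := by
  intro i j hij
  by_contra hne
  rcases lt_or_gt_of_ne (fun h : x i = x j => hne (hx h)) with h | h
  · exact absurd hij (rk_strictMono x h).ne
  · exact absurd hij.symm (rk_strictMono x h).ne

lemma rk_image {x : Fin (n + 1) → ℝ} (hx : Function.Injective x) :
    Finset.image (rk x) Finset.univ = Finset.Icc 1 (n + 1) := by
  apply Finset.eq_of_subset_of_card_le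
  · intro m hm
    simp only [Finset.mem_image, Finset.mem_univ, true_and] at hm
    rcases hm with ⟨i, rfl⟩
    exact Finset.mem_Icc.2 ⟨rk_pos x i, rk_le x i⟩
  · rw [Finset.card_image_of_injective _ (rk_inj hx)]
    simp

lemma rk_existsUnique {x : Fin (n + 1) → ℝ} (hx : Function.Injective x)
    {m : ℕ} (hm : m ∈ Finset.Icc 1 (n + 1)) : ∃! i, rk x i = m := by
  rw [← rk_image hx] at hm
  simp only [Finset.mem_image, Finset.mem_univ, true_and] at hm
  rcases hm with ⟨i, hi⟩
  exact ⟨i, hi, fun j hj => rk_inj hx (hj.trans hi.symm)⟩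

lemma rk_measurable (i : Fin (n + 1)) : Measurable (fun x : Fin (n + 1) → ℝ => rk x i) := by
  unfold rk
  simp_rw [Finset.card_filter]
  apply Finset.measurable_sum
  intro j _
  exact Measurable.ite (measurableSet_le (measurable_pi_apply j) (measurable_pi_apply i))
    measurable_const measurable_const

end ConformalAux

/-- For exchangeable random variables with almost surely distinct values, the rank of the
last one among all `n+1` is uniformly distributed: the probability that it is at most `k`
equals `k/(n+1)` for every `1 ≤ k ≤ n+1`. -/
theorem exchangeable_rank_uniform
    {Ω : Type*} [MeasurableSpace Ω] (μ : Measure Ω) [IsProbabilityMeasure μ]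
    (n : ℕ) (S : Fin (n + 1) → Ω → ℝ)
    (hmeas : ∀ i, Measurable (S i))
    (hexch : ∀ π : Equiv.Perm (Fin (n + 1)),
      Measure.map (fun ω => fun i => S (π i) ω) μ
        = Measure.map (fun ω => fun i => S i ω) μ)
    (hdist : μ {ω | ∃ i j : Fin (n + 1), i ≠ j ∧ S i ω = S j ω} = 0) :
    ∀ k : ℕ, 1 ≤ k → k ≤ n + 1 →
      μ {ω | (Finset.univ.filter (fun j : Fin (n + 1) =>
          S j ω ≤ S (Fin.last n) ω)).card ≤ k}
        = (k : ENNReal) / (n + 1) := by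
  intro k hk1 hk2
  set V : Ω → (Fin (n + 1) → ℝ) := fun ω i => S i ω with hVdef
  have hVmeas : Measurable V := measurable_pi_lambda _ hmeas
  set D : Set Ω := {ω | Function.Injective (V ω)} with hDdef
  have hDc : μ Dᶜ = 0 := by
    have : Dᶜ = {ω | ∃ i j : Fin (n + 1), i ≠ j ∧ S i ω = S j ω} := by
      ext ω
      simp only [Set.mem_compl_iff, Set.mem_setOf_eq, hDdef, Function.not_injective_iff]
      constructor
      · rintro ⟨a, b, hab, hne⟩; exact ⟨a, b, hne, hab⟩
      · rintro ⟨a, b, hne, hab⟩; exact ⟨a, b, hab, hne⟩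
    rw [this]; exact hdist
  have hDmeas : MeasurableSet D := by
    have h1 : ∀ i j : Fin (n + 1), MeasurableSet {ω | S i ω = S j ω → i = j} := by
      intro i j
      by_cases h : i = j
      · simp [h]
      · have : {ω | S i ω = S j ω → i = j} = {ω | S i ω = S j ω}ᶜ := by
          ext ω; simp [h]
        rw [this]
        exact (measurableSet_eq_fun (hmeas i) (hmeas j)).compl
    have : D = ⋂ i, ⋂ j, {ω | S i ω = S j ω → i = j} := by
      ext ω
      simp only [hDdef, Set.mem_setOf_eq, Set.mem_iInter, Function.Injective]
      exact Iff.rfl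
    rw [this]
    exact MeasurableSet.iInter fun i => MeasurableSet.iInter fun j => h1 i j
  -- rank events
  set E : ℕ → Set Ω := fun m => {ω | ConformalAux.rk (V ω) (Fin.last n) = m} with hEdef
  have hAmeas : ∀ m : ℕ,
      MeasurableSet {x : Fin (n + 1) → ℝ | ConformalAux.rk x (Fin.last n) = m} := fun m =>
    ConformalAux.rk_measurable (Fin.last n) (measurableSet_singleton m)
  have hEmeas : ∀ m, MeasurableSet (E m) := fun m => hVmeas (hAmeas m)
  have hEimeas : ∀ (i : Fin (n + 1)) (m : ℕ),
      MeasurableSet {ω | ConformalAux.rk (V ω) i = m} := by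
    intro i m
    exact hVmeas (ConformalAux.rk_measurable i (measurableSet_singleton m))
  -- exchangeability: each position has the same rank law
  have key : ∀ (i : Fin (n + 1)) (m : ℕ),
      μ {ω | ConformalAux.rk (V ω) i = m} = μ (E m) := by
    intro i m
    set π := Equiv.swap i (Fin.last n) with hπ
    have hmap1 : Measurable (fun ω => fun j => S (π j) ω) :=
      measurable_pi_lambda _ (fun j => hmeas _)
    have h1 := congrArg
      (fun ν : Measure (Fin (n + 1) → ℝ) =>
        ν {x | ConformalAux.rk x (Fin.last n) = m}) (hexch π)
    rw [Measure.map_apply hmap1 (hAmeas m), Measure.map_apply hVmeas (hAmeas m)] at h1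
    have hset : (fun ω => fun j => S (π j) ω) ⁻¹'
        {x | ConformalAux.rk x (Fin.last n) = m}
        = {ω | ConformalAux.rk (V ω) i = m} := by
      ext ω
      simp only [Set.mem_preimage, Set.mem_setOf_eq]
      have h2 : (fun j => S (π j) ω) = (fun j => V ω (π j)) := rfl
      rw [h2, ConformalAux.rk_comp]
      have : π (Fin.last n) = i := Equiv.swap_apply_right i (Fin.last n)
      rw [this]
    rw [hset] at h1
    exact h1
  -- uniformity
  have huniform : ∀ m ∈ Finset.Icc 1 (n + 1), μ (E m) = ((n : ENNReal) + 1)⁻¹ := by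
    intro m hm
    have hdisj : ((Finset.univ : Finset (Fin (n + 1))) : Set (Fin (n + 1))).PairwiseDisjoint
        (fun i => {ω | ConformalAux.rk (V ω) i = m} ∩ D) := by
      intro i _ j _ hij
      refine Set.disjoint_left.2 ?_
      rintro ω ⟨hi, hωD⟩ ⟨hj, -⟩
      exact hij (ConformalAux.rk_inj hωD (hi.trans hj.symm))
    have hcup : (⋃ i ∈ (Finset.univ : Finset (Fin (n + 1))),
        ({ω | ConformalAux.rk (V ω) i = m} ∩ D)) = D := by
      ext ω
      simp only [Set.mem_iUnion, Finset.mem_univ, Set.mem_inter_iff, Set.mem_setOf_eq,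
        exists_prop, true_and]
      constructor
      · rintro ⟨i, -, hωD⟩; exact hωD
      · intro hωD
        obtain ⟨i, hi, -⟩ := ConformalAux.rk_existsUnique hωD hm
        exact ⟨i, hi, hωD⟩
    have hsum : ∑ i : Fin (n + 1), μ ({ω | ConformalAux.rk (V ω) i = m} ∩ D) = 1 := by
      rw [← measure_biUnion_finset hdisj (fun i _ => (hEimeas i m).inter hDmeas), hcup]
      have : D =ᵐ[μ] (Set.univ : Set Ω) := by
        rw [Filter.eventuallyEq_set]
        refine (measure_eq_zero_iff_ae_notMem.1 hDc).mono ?_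
        intro ω hω
        simp only [Set.mem_compl_iff, not_not] at hω
        simp [hω]
      rw [measure_congr this, measure_univ]
    have hterm : ∀ i : Fin (n + 1),
        μ ({ω | ConformalAux.rk (V ω) i = m} ∩ D) = μ (E m) := by
      intro i
      rw [measure_inter_conull hDc, key]
    rw [Finset.sum_congr rfl (fun i _ => hterm i), Finset.sum_const, Finset.card_univ,
      Fintype.card_fin, nsmul_eq_mul] at hsum
    have hne0 : ((n : ENNReal) + 1) ≠ 0 := by simp
    have hnetop : ((n : ENNReal) + 1) ≠ ⊤ := by simp
    have h3 : μ (E m) = 1 / ((n : ENNReal) + 1) := by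
      rw [ENNReal.eq_div_iff hne0 hnetop]
      push_cast at hsum
      exact hsum
    rw [h3, one_div]
  -- final computation
  have hrk : ∀ ω, (Finset.univ.filter (fun j : Fin (n + 1) =>
      S j ω ≤ S (Fin.last n) ω)).card = ConformalAux.rk (V ω) (Fin.last n) := fun ω => rfl
  have hsetfinal : {ω | (Finset.univ.filter (fun j : Fin (n + 1) =>
      S j ω ≤ S (Fin.last n) ω)).card ≤ k} = ⋃ m ∈ Finset.Icc 1 k, E m := by
    ext ω
    simp only [Set.mem_setOf_eq, Set.mem_iUnion, Finset.mem_Icc, exists_prop, hEdef, hrk ω]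
    constructor
    · intro h
      exact ⟨ConformalAux.rk (V ω) (Fin.last n),
        ⟨ConformalAux.rk_pos _ _, h⟩, rfl⟩
    · rintro ⟨m, ⟨-, hmk⟩, rfl⟩
      exact hmk
  have hdisj2 : ((Finset.Icc 1 k : Finset ℕ) : Set ℕ).PairwiseDisjoint E := by
    intro a _ b _ hab
    refine Set.disjoint_left.2 ?_
    rintro ω ha hb
    exact hab ((ha : _ = a).symm.trans (hb : _ = b))
  rw [hsetfinal, measure_biUnion_finset hdisj2 (fun m _ => hEmeas m)]
  have hc : ∀ m ∈ Finset.Icc 1 k, μ (E m) = ((n : ENNReal) + 1)⁻¹ := fun m hm =>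
    huniform m (Finset.mem_Icc.2
      ⟨(Finset.mem_Icc.1 hm).1, le_trans (Finset.mem_Icc.1 hm).2 hk2⟩)
  rw [Finset.sum_congr rfl hc, Finset.sum_const, Nat.card_Icc]
  simp only [Nat.add_sub_cancel, nsmul_eq_mul]
  rw [div_eq_mul_inv]
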